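/- Let f : ℝ^n → ℝ be differentiable and satisfy the local Regularity Condition RC(μ,λ,ε) with constants μ, λ, ε > 0 at a local minimizer x⋆ (so ⟨∇f(z), z − x⋆⟩ ≥ (μ/2)‖∇f(z)‖² + (λ/2)‖z − x⋆‖² for all z ∈ N_ε(x⋆) := {z : ‖z − x⋆‖ ≤ ε‖x⋆‖}, and ∇f(x⋆) = 0). Consider the general accelerated gradient method with parameters α > 0 and β₁, β₂ ∈ [0,1): y_k = (1 + β₂)z_k − β₂z_{k−1}, z_{k+1} = (1 + β₁)z_k − β₁z_{k−1} − α∇f(y_k), with system matrices A = [[1 + β₁, −β₁],[1, 0]], B = [−α; 0], C = [1 + β₂, −β₂], D = 0. Suppose there exist a symmetric positive definite P ∈ ℝ^{2×2} and ρ ∈ (0,1) such that [[AᵀPA − ρ²P, AᵀPB],[BᵀPA, BᵀPB]] + [[C, D],[0_{1×2}, 1]]ᵀ [[−λ, 1],[1, −μ]] [[C, D],[0_{1×2}, 1]] ⪯ 0. If z₋₁, z₀ ∈ N_{ε/√(10·cond(P))}(x⋆), then y_k ∈ N_ε(x⋆) for all k ≥ 0, where cond(P) is the ratio of the largest to the smallest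 eigenvalue of P. -/

import Mathlib

set_option maxHeartbeats 1000000

open Matrix InnerProductSpace

section Helpers

variable {E : Type*} [NormedAddCommGroup E] [InnerProductSpace ℝ E]

noncomputable def qf {ι : Type*} [Fintype ι] (N : Matrix ι ι ℝ) (u : ι → E) : ℝ :=
  ∑ i, ∑ j, N i j * ⟪u i, u j⟫_ℝ

lemma qf_nonneg {ι : Type*} [Fintype ι] [DecidableEq ι] {N : Matrix ι ι ℝ}
    (hN : N.PosSemidef) (u : ι → E) : 0 ≤ qf N u := by
  obtain ⟨B, rfl⟩ : ∃ B : Matrix ι ι ℝ, N = Bᴴ * B := by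
    open scoped MatrixOrder in
    exact CStarAlgebra.nonneg_iff_eq_star_mul_self.mp hN.nonneg
  have h1 : qf (Bᴴ * B) u = ∑ i, ∑ j, ∑ k, B k i * B k j * ⟪u i, u j⟫_ℝ := by
    simp only [qf, Matrix.mul_apply, Matrix.conjTranspose_apply, star_trivial, Finset.sum_mul]
  have h2 : ∀ k, ⟪∑ i, B k i • u i, ∑ j, B k j • u j⟫_ℝ
      = ∑ i, ∑ j, B k i * B k j * ⟪u i, u j⟫_ℝ := by
    intro k
    simp only [sum_inner, inner_sum, real_inner_smul_left, real_inner_smul_right]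
    exact Finset.sum_congr rfl fun i _ => Finset.sum_congr rfl fun j _ => by
      rw [real_inner_comm (u i) (u j)]; ring
  have h : qf (Bᴴ * B) u = ∑ k, ⟪∑ i, B k i • u i, ∑ j, B k j • u j⟫_ℝ := by
    rw [h1]
    rw [show (∑ i, ∑ j, ∑ k, B k i * B k j * ⟪u i, u j⟫_ℝ)
        = ∑ i, ∑ k, ∑ j, B k i * B k j * ⟪u i, u j⟫_ℝ from
      Finset.sum_congr rfl fun i _ => Finset.sum_comm]
    rw [Finset.sum_comm]
    exact Finset.sum_congr rfl fun k _ => (h2 k).symm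
  rw [h]
  exact Finset.sum_nonneg fun k _ => real_inner_self_nonneg

lemma herm_sub_smul_posSemidef {m : Type*} [Fintype m] [DecidableEq m]
    {A : Matrix m m ℝ} (hA : A.IsHermitian) {c : ℝ} (h : ∀ i, c ≤ hA.eigenvalues i) :
    (A - c • 1).PosSemidef := by
  have hU := (Matrix.mem_unitaryGroup_iff).mp (hA.eigenvectorUnitary).2
  have key : A - c • 1 = (hA.eigenvectorUnitary : Matrix m m ℝ) *
      Matrix.diagonal (fun i => hA.eigenvalues i - c) *
      (star (hA.eigenvectorUnitary : Matrix m m ℝ)) := by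
    conv_lhs => rw [hA.spectral_theorem]
    have : Matrix.diagonal (fun i => hA.eigenvalues i - c)
        = Matrix.diagonal (RCLike.ofReal ∘ hA.eigenvalues) - c • 1 := by
      ext i j
      by_cases hij : i = j <;> simp [Matrix.diagonal, hij]
    rw [this, Matrix.mul_sub, Matrix.sub_mul]
    congr 1
    rw [Matrix.mul_smul, Matrix.smul_mul, mul_one, hU]
  rw [key]
  exact (Matrix.posSemidef_diagonal_iff.mpr fun i =>
    sub_nonneg.mpr (h i)).mul_mul_conjTranspose_same _

lemma smul_sub_herm_posSemidef {m : Type*} [Fintype m] [DecidableEq m]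
    {A : Matrix m m ℝ} (hA : A.IsHermitian) {c : ℝ} (h : ∀ i, hA.eigenvalues i ≤ c) :
    (c • 1 - A).PosSemidef := by
  have hU := (Matrix.mem_unitaryGroup_iff).mp (hA.eigenvectorUnitary).2
  have key : c • 1 - A = (hA.eigenvectorUnitary : Matrix m m ℝ) *
      Matrix.diagonal (fun i => c - hA.eigenvalues i) *
      (star (hA.eigenvectorUnitary : Matrix m m ℝ)) := by
    conv_lhs => rw [hA.spectral_theorem]
    have : Matrix.diagonal (fun i => c - hA.eigenvalues i)
        = c • 1 - Matrix.diagonal (RCLike.ofReal ∘ hA.eigenvalues) := by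
      ext i j
      by_cases hij : i = j <;> simp [Matrix.diagonal, hij]
    rw [this, Matrix.mul_sub, Matrix.sub_mul]
    congr 1
    rw [Matrix.mul_smul, Matrix.smul_mul, mul_one, hU]
  rw [key]
  exact (Matrix.posSemidef_diagonal_iff.mpr fun i =>
    sub_nonneg.mpr (h i)).mul_mul_conjTranspose_same _

lemma key_step (P : Matrix (Fin 2) (Fin 2) ℝ) (hsym : P 1 0 = P 0 1)
    (α β₁ β₂ ρ lam μ : ℝ) (a b g : E)
    (h1 : 0 ≤ qf (-(fromBlocks
        ((!![1 + β₁, -β₁; 1, 0])ᵀ * P * !![1 + β₁, -β₁; 1, 0] - ρ ^ 2 • P)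
        ((!![1 + β₁, -β₁; 1, 0])ᵀ * P * !![-α; 0])
        ((!![-α; 0])ᵀ * P * !![1 + β₁, -β₁; 1, 0])
        ((!![-α; 0])ᵀ * P * !![-α; 0]) +
      (fromBlocks !![1 + β₂, -β₂] (0 : Matrix (Fin 1) (Fin 1) ℝ) 0
        (1 : Matrix (Fin 1) (Fin 1) ℝ))ᵀ *
      (fromBlocks (-lam • (1 : Matrix (Fin 1) (Fin 1) ℝ)) (1 : Matrix (Fin 1) (Fin 1) ℝ)
        (1 : Matrix (Fin 1) (Fin 1) ℝ) (-μ • (1 : Matrix (Fin 1) (Fin 1) ℝ))) *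
      (fromBlocks !![1 + β₂, -β₂] (0 : Matrix (Fin 1) (Fin 1) ℝ) 0
        (1 : Matrix (Fin 1) (Fin 1) ℝ)))) (Sum.elim ![a, b] ![g]))
    (hRC : 2 * ⟪(1+β₂)•a - β₂•b, g⟫_ℝ - μ * ⟪g,g⟫_ℝ
      - lam * ⟪(1+β₂)•a - β₂•b, (1+β₂)•a - β₂•b⟫_ℝ ≥ 0) :
    qf P ![(1+β₁)•a - β₁•b - α•g, a] ≤ ρ^2 * qf P ![a, b] := by
  have cba : ⟪b,a⟫_ℝ = ⟪a,b⟫_ℝ := real_inner_comm _ _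
  have cga : ⟪g,a⟫_ℝ = ⟪a,g⟫_ℝ := real_inner_comm _ _
  have cgb : ⟪g,b⟫_ℝ = ⟪b,g⟫_ℝ := real_inner_comm _ _
  simp only [qf, Fintype.sum_sum_type, Fin.sum_univ_succ, Fin.sum_univ_zero, Sum.elim_inl,
    Sum.elim_inr, Matrix.cons_val_zero, Matrix.cons_val_one, Matrix.head_cons,
    Matrix.head_fin_const, Matrix.neg_apply, Matrix.add_apply, Matrix.fromBlocks_apply₁₁,
    Matrix.fromBlocks_apply₁₂, Matrix.fromBlocks_apply₂₁, Matrix.fromBlocks_apply₂₂,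
    Matrix.mul_apply, Matrix.transpose_apply, Matrix.sub_apply, Matrix.smul_apply,
    Matrix.one_apply, Matrix.zero_apply, smul_eq_mul, inner_sub_left, inner_sub_right,
    real_inner_smul_left, real_inner_smul_right, Fin.isValue, add_zero, zero_add, mul_zero,
    zero_mul, Matrix.cons_val_succ, if_true, ite_true, Matrix.of_apply,
    Fin.succ_zero_eq_one] at h1 hRC ⊢
  simp only [cba, cga, cgb, hsym] at h1 hRC ⊢
  linarith [h1, hRC]

lemma qf2_lower {c : ℝ} {P : Matrix (Fin 2) (Fin 2) ℝ} (hPSD : (P - c • 1).PosSemidef)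
    (v w : E) : c * (‖v‖^2 + ‖w‖^2) ≤ qf P ![v, w] := by
  have h := qf_nonneg hPSD ![v, w]
  simp only [qf, Fin.sum_univ_succ, Fin.sum_univ_zero, Matrix.sub_apply, Matrix.smul_apply,
    Matrix.one_apply, Matrix.cons_val_zero, Matrix.cons_val_one, Matrix.head_cons,
    smul_eq_mul, Matrix.cons_val_succ, if_true, ite_true, Fin.succ_zero_eq_one,
    add_zero, mul_zero, zero_mul, real_inner_self_eq_norm_sq,
    Fin.reduceAdd, Fin.reduceEq, reduceIte, sub_zero, mul_one] at h ⊢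
  linarith [h]

lemma qf2_upper {c : ℝ} {P : Matrix (Fin 2) (Fin 2) ℝ} (hPSD : (c • 1 - P).PosSemidef)
    (v w : E) : qf P ![v, w] ≤ c * (‖v‖^2 + ‖w‖^2) := by
  have h := qf_nonneg hPSD ![v, w]
  simp only [qf, Fin.sum_univ_succ, Fin.sum_univ_zero, Matrix.sub_apply, Matrix.smul_apply,
    Matrix.one_apply, Matrix.cons_val_zero, Matrix.cons_val_one, Matrix.head_cons,
    smul_eq_mul, Matrix.cons_val_succ, if_true, ite_true, Fin.succ_zero_eq_one,
    add_zero, mul_zero, zero_mul, real_inner_self_eq_norm_sq,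
    Fin.reduceAdd, Fin.reduceEq, reduceIte, sub_zero, zero_sub, mul_one] at h ⊢
  linarith [h]

end Helpers

/-- Under the local Regularity Condition RC(μ,λ,ε), if the accelerated gradient
method is initialized in the neighborhood of radius `ε‖x⋆‖/√(10 cond(P))`, then all iterates
`y_k` remain in the neighborhood `N_ε(x⋆)` where RC holds. -/
theorem agd_iterates_stay_in_RC_region {n : ℕ}
    (f : EuclideanSpace ℝ (Fin n) → ℝ)
    (μ lam ε : ℝ) (hμ : 0 < μ) (hlam : 0 < lam) (hε : 0 < ε)
    (hdiff : Differentiable ℝ f)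
    (xs : EuclideanSpace ℝ (Fin n))
    (hmin : ∀ z, ‖z - xs‖ ≤ ε * ‖xs‖ → f xs ≤ f z)
    (hgrad0 : gradient f xs = 0)
    (hRC : ∀ z : EuclideanSpace ℝ (Fin n), ‖z - xs‖ ≤ ε * ‖xs‖ →
      ⟪gradient f z, z - xs⟫_ℝ ≥ μ / 2 * ‖gradient f z‖ ^ 2 + lam / 2 * ‖z - xs‖ ^ 2)
    (α β₁ β₂ : ℝ) (hα : 0 < α)
    (hβ₁ : β₁ ∈ Set.Ico (0 : ℝ) 1) (hβ₂ : β₂ ∈ Set.Ico (0 : ℝ) 1)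
    (z y : ℕ → EuclideanSpace ℝ (Fin n))
    (hy : ∀ k, y k = (1 + β₂) • z (k + 1) - β₂ • z k)
    (hz : ∀ k, z (k + 2) = (1 + β₁) • z (k + 1) - β₁ • z k - α • gradient f (y k))
    (P : Matrix (Fin 2) (Fin 2) ℝ) (hP : P.IsHermitian) (hPpos : P.PosDef)
    (ρ : ℝ) (hρ : ρ ∈ Set.Ioo (0 : ℝ) 1)
    (hLMI : (-(fromBlocks
        ((!![1 + β₁, -β₁; 1, 0])ᵀ * P * !![1 + β₁, -β₁; 1, 0] - ρ ^ 2 • P)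
        ((!![1 + β₁, -β₁; 1, 0])ᵀ * P * !![-α; 0])
        ((!![-α; 0])ᵀ * P * !![1 + β₁, -β₁; 1, 0])
        ((!![-α; 0])ᵀ * P * !![-α; 0]) +
      (fromBlocks !![1 + β₂, -β₂] (0 : Matrix (Fin 1) (Fin 1) ℝ) 0
        (1 : Matrix (Fin 1) (Fin 1) ℝ))ᵀ *
      (fromBlocks (-lam • (1 : Matrix (Fin 1) (Fin 1) ℝ)) (1 : Matrix (Fin 1) (Fin 1) ℝ)
        (1 : Matrix (Fin 1) (Fin 1) ℝ) (-μ • (1 : Matrix (Fin 1) (Fin 1) ℝ))) *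
      (fromBlocks !![1 + β₂, -β₂] (0 : Matrix (Fin 1) (Fin 1) ℝ) 0
        (1 : Matrix (Fin 1) (Fin 1) ℝ)))).PosSemidef)
    (hinit0 : ‖z 0 - xs‖ ≤
      ε / Real.sqrt (10 * ((⨆ i, hP.eigenvalues i) / (⨅ i, hP.eigenvalues i))) * ‖xs‖)
    (hinit1 : ‖z 1 - xs‖ ≤
      ε / Real.sqrt (10 * ((⨆ i, hP.eigenvalues i) / (⨅ i, hP.eigenvalues i))) * ‖xs‖) :
    ∀ k, ‖y k - xs‖ ≤ ε * ‖xs‖ := by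
  obtain ⟨hβ₁0, hβ₁1⟩ := hβ₁
  obtain ⟨hβ₂0, hβ₂1⟩ := hβ₂
  obtain ⟨hρ0, hρ1⟩ := hρ
  set cmax := ⨆ i, hP.eigenvalues i with hcmax_def
  set cmin := ⨅ i, hP.eigenvalues i with hcmin_def
  have hsym : P 1 0 = P 0 1 := by
    have h := congrFun (congrFun hP 0) 1
    simpa [Matrix.conjTranspose_apply] using h
  have heigpos : ∀ i, 0 < hP.eigenvalues i := fun i => hPpos.eigenvalues_pos i
  have hbddA : BddAbove (Set.range hP.eigenvalues) := Set.Finite.bddAbove (Set.finite_range _)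
  have hbddB : BddBelow (Set.range hP.eigenvalues) := Set.Finite.bddBelow (Set.finite_range _)
  have hcmin_le : ∀ i, cmin ≤ hP.eigenvalues i := fun i => ciInf_le hbddB i
  have hle_cmax : ∀ i, hP.eigenvalues i ≤ cmax := fun i => le_ciSup hbddA i
  have hcmin_pos : 0 < cmin := by
    obtain ⟨i, hi⟩ := exists_eq_ciInf_of_finite (f := hP.eigenvalues)
    rw [hcmin_def, ← hi]; exact heigpos i
  have hcmax_pos : 0 < cmax := lt_of_lt_of_le (heigpos 0) (hle_cmax 0)
  have h10 : (0:ℝ) < 10 * (cmax / cmin) := by positivity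
  set s := Real.sqrt (10 * (cmax / cmin)) with hs_def
  have hs_pos : 0 < s := Real.sqrt_pos.mpr h10
  have hs_sq : s ^ 2 = 10 * (cmax / cmin) := Real.sq_sqrt h10.le
  -- quadratic form bounds
  have hPSDlo := herm_sub_smul_posSemidef hP hcmin_le
  have hPSDhi := smul_sub_herm_posSemidef hP hle_cmax
  have lower : ∀ v w : EuclideanSpace ℝ (Fin n),
      cmin * (‖v‖^2 + ‖w‖^2) ≤ qf P ![v, w] := fun v w => qf2_lower hPSDlo v w
  have upper : ∀ v w : EuclideanSpace ℝ (Fin n),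
      qf P ![v, w] ≤ cmax * (‖v‖^2 + ‖w‖^2) := fun v w => qf2_upper hPSDhi v w
  -- key equality for radii
  have heq : cmax * (2 * (ε / s * ‖xs‖)^2) = cmin * ((ε * ‖xs‖)^2 / 5) := by
    have h1 : (ε / s * ‖xs‖)^2 = ε^2 * ‖xs‖^2 / (10 * (cmax / cmin)) := by
      rw [mul_pow, div_pow, hs_sq]; ring
    rw [h1]
    field_simp
    ring
  -- one-step decrease
  have step : ∀ k, ‖y k - xs‖ ≤ ε * ‖xs‖ →
      qf (E := EuclideanSpace ℝ (Fin n)) P ![z (k+2) - xs, z (k+1) - xs]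
        ≤ ρ^2 * qf P ![z (k+1) - xs, z k - xs] := by
    intro k hk
    have hznew : z (k+2) - xs
        = (1+β₁) • (z (k+1) - xs) - β₁ • (z k - xs) - α • gradient f (y k) := by
      rw [hz k]; module
    have hw : y k - xs = (1+β₂) • (z (k+1) - xs) - β₂ • (z k - xs) := by
      rw [hy k]; module
    have hrc := hRC (y k) hk
    rw [hw] at hrc
    have hrc' : 2 * ⟪(1+β₂) • (z (k+1) - xs) - β₂ • (z k - xs), gradient f (y k)⟫_ℝ
        - μ * ⟪gradient f (y k), gradient f (y k)⟫_ℝ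
        - lam * ⟪(1+β₂) • (z (k+1) - xs) - β₂ • (z k - xs),
            (1+β₂) • (z (k+1) - xs) - β₂ • (z k - xs)⟫_ℝ ≥ 0 := by
      rw [real_inner_self_eq_norm_sq, real_inner_self_eq_norm_sq,
        real_inner_comm (gradient f (y k)) ((1+β₂) • (z (k+1) - xs) - β₂ • (z k - xs))]
      linarith [hrc]
    have hq := qf_nonneg hLMI
      (Sum.elim ![z (k+1) - xs, z k - xs] ![gradient f (y k)])
    rw [hznew]
    exact key_step P hsym α β₁ β₂ ρ lam μ _ _ _ hq hrc'
  -- initial bound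
  have hinit_sq : ‖z 1 - xs‖^2 + ‖z 0 - xs‖^2 ≤ 2 * (ε / s * ‖xs‖)^2 := by
    have e1 : ‖z 1 - xs‖^2 ≤ (ε / s * ‖xs‖)^2 :=
      pow_le_pow_left₀ (norm_nonneg _) hinit1 2
    have e0 : ‖z 0 - xs‖^2 ≤ (ε / s * ‖xs‖)^2 :=
      pow_le_pow_left₀ (norm_nonneg _) hinit0 2
    linarith
  have hV0 : qf (E := EuclideanSpace ℝ (Fin n)) P ![z 1 - xs, z 0 - xs]
      ≤ cmin * ((ε * ‖xs‖)^2 / 5) := by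
    calc qf (E := EuclideanSpace ℝ (Fin n)) P ![z 1 - xs, z 0 - xs]
        ≤ cmax * (‖z 1 - xs‖^2 + ‖z 0 - xs‖^2) := upper _ _
      _ ≤ cmax * (2 * (ε / s * ‖xs‖)^2) :=
          mul_le_mul_of_nonneg_left hinit_sq hcmax_pos.le
      _ = cmin * ((ε * ‖xs‖)^2 / 5) := heq
  -- from V k ≤ V 0 derive the y bound
  have hstep2 : ∀ k,
      qf (E := EuclideanSpace ℝ (Fin n)) P ![z (k+1) - xs, z k - xs]
        ≤ qf P ![z 1 - xs, z 0 - xs] → ‖y k - xs‖ ≤ ε * ‖xs‖ := by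
    intro k hVk
    have h1 : cmin * (‖z (k+1) - xs‖^2 + ‖z k - xs‖^2) ≤ cmin * ((ε * ‖xs‖)^2 / 5) :=
      le_trans (le_trans (lower _ _) hVk) hV0
    have h2 : ‖z (k+1) - xs‖^2 + ‖z k - xs‖^2 ≤ (ε * ‖xs‖)^2 / 5 :=
      le_of_mul_le_mul_left h1 hcmin_pos
    have hw : y k - xs = (1+β₂) • (z (k+1) - xs) - β₂ • (z k - xs) := by
      rw [hy k]; module
    have htri : ‖y k - xs‖ ≤ (1+β₂) * ‖z (k+1) - xs‖ + β₂ * ‖z k - xs‖ := by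
      rw [hw]
      refine (norm_sub_le _ _).trans ?_
      rw [norm_smul, norm_smul, Real.norm_eq_abs, Real.norm_eq_abs,
        abs_of_nonneg (by linarith : (0:ℝ) ≤ 1 + β₂), abs_of_nonneg hβ₂0]
    have hysq : ‖y k - xs‖^2 ≤ (ε * ‖xs‖)^2 := by
      have hx := norm_nonneg (z (k+1) - xs)
      have hyn := norm_nonneg (z k - xs)
      have hyy := norm_nonneg (y k - xs)
      nlinarith [mul_le_mul htri htri hyy (by positivity :
          (0:ℝ) ≤ (1+β₂) * ‖z (k+1) - xs‖ + β₂ * ‖z k - xs‖),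
        sq_nonneg ((1+β₂) * ‖z k - xs‖ - β₂ * ‖z (k+1) - xs‖),
        mul_nonneg (by nlinarith : (0:ℝ) ≤ 5 - (1+β₂)^2 - β₂^2)
          (by positivity : (0:ℝ) ≤ ‖z (k+1) - xs‖^2 + ‖z k - xs‖^2), h2]
    have := Real.sqrt_le_sqrt hysq
    rwa [Real.sqrt_sq (norm_nonneg _), Real.sqrt_sq (by positivity)] at this
  -- induction: V k ≤ V 0
  have hVnonneg : ∀ k, 0 ≤ qf (E := EuclideanSpace ℝ (Fin n)) P ![z (k+1) - xs, z k - xs] :=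
    fun k => le_trans (by positivity) (lower (z (k+1) - xs) (z k - xs))
  have main : ∀ k, qf (E := EuclideanSpace ℝ (Fin n)) P ![z (k+1) - xs, z k - xs]
      ≤ qf P ![z 1 - xs, z 0 - xs] := by
    intro k
    induction k with
    | zero => exact le_refl _
    | succ k ih =>
      have hyk := hstep2 k ih
      have hstep := step k hyk
      have h1 : ρ^2 * qf (E := EuclideanSpace ℝ (Fin n)) P ![z (k+1) - xs, z k - xs]
          ≤ qf P ![z (k+1) - xs, z k - xs] := by
        have hρsq : ρ^2 ≤ 1 := by nlinarith
        calc ρ^2 * qf (E := EuclideanSpace ℝ (Fin n)) P ![z (k+1) - xs, z k - xs]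
            ≤ 1 * qf P ![z (k+1) - xs, z k - xs] :=
              mul_le_mul_of_nonneg_right hρsq (hVnonneg k)
          _ = qf P ![z (k+1) - xs, z k - xs] := one_mul _
      calc qf (E := EuclideanSpace ℝ (Fin n)) P ![z (k+1+1) - xs, z (k+1) - xs]
          ≤ ρ^2 * qf P ![z (k+1) - xs, z k - xs] := hstep
        _ ≤ qf P ![z (k+1) - xs, z k - xs] := h1
        _ ≤ qf P ![z 1 - xs, z 0 - xs] := ih
  intro k
  exact hstep2 k (main k)
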